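/- Let K ≥ 1 and let R₁, …, R_K be independent nonnegative random variables with P(R_j > r) = exp(-λ_j π r²) for r ≥ 0, where λ_j > 0. Let P_j, B_j > 0 and α > 2. Then for each i, the probability that P_i B_i R_i^{-α} > P_j B_j R_j^{-α} for all j ≠ i equals 1 / Σ_{j=1}^K (λ_j/λ_i)·((P_j B_j)/(P_i B_i))^{2/α}. -/

import Mathlib

open MeasureTheory Set

theorem stmt11 {Ω : Type*} [MeasurableSpace Ω] (μ : Measure Ω) [IsProbabilityMeasure μ]
    (K : ℕ) (hK : 1 ≤ K) (R : Fin K → Ω → ℝ) (lam P B : Fin K → ℝ) (α : ℝ)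
    (hlam : ∀ j, 0 < lam j) (hP : ∀ j, 0 < P j) (hB : ∀ j, 0 < B j) (hα : 2 < α)
    (hmeas : ∀ j, Measurable (R j)) (hnn : ∀ j ω, 0 ≤ R j ω)
    (hindep : ProbabilityTheory.iIndepFun R μ)
    (hccdf : ∀ j, ∀ r : ℝ, 0 ≤ r →
      μ {ω | r < R j ω} = ENNReal.ofReal (Real.exp (-(lam j) * Real.pi * r ^ 2)))
    (i : Fin K) :
    μ {ω | ∀ j, j ≠ i → P j * B j * (R j ω) ^ (-α) < P i * B i * (R i ω) ^ (-α)}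
      = ENNReal.ofReal
          (1 / ∑ j, (lam j / lam i) * ((P j * B j) / (P i * B i)) ^ (2 / α)) := by
  classical
  have hαpos : (0:ℝ) < α := by linarith
  have hQpos : ∀ j, 0 < P j * B j := fun j => mul_pos (hP j) (hB j)
  -- trivial case: no index besides i
  by_cases hall : ∀ j : Fin K, j = i
  · have hset : {ω | ∀ j, j ≠ i → P j * B j * (R j ω) ^ (-α) < P i * B i * (R i ω) ^ (-α)}
        = univ := by
      ext ω; simp only [mem_setOf_eq, mem_univ, iff_true]
      intro j hj; exact absurd (hall j) hj
    have huniv : (Finset.univ : Finset (Fin K)) = {i} := by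
      ext j; simp [hall j]
    rw [hset, measure_univ, huniv, Finset.sum_singleton, div_self (hlam i).ne',
      div_self (hQpos i).ne', Real.one_rpow, one_mul]
    norm_num
  push_neg at hall
  obtain ⟨j₀, hj₀⟩ := hall
  set c : Fin K → ℝ := fun j => ((P j * B j) / (P i * B i)) ^ (α⁻¹) with hc
  have hcpos : ∀ j, 0 < c j := fun j => Real.rpow_pos_of_pos (div_pos (hQpos j) (hQpos i)) _
  have hci : c i = 1 := by simp [hc, div_self (hQpos i).ne']
  have hc2 : ∀ j, (c j)^2 = ((P j * B j) / (P i * B i)) ^ (2/α) := by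
    intro j
    rw [hc]
    rw [← Real.rpow_natCast (((P j * B j) / (P i * B i)) ^ (α⁻¹)) 2,
      ← Real.rpow_mul (div_pos (hQpos j) (hQpos i)).le]
    congr 1
    push_cast
    field_simp
  -- pointwise equivalence
  have key : ∀ j (x y : ℝ), 0 < x → 0 < y →
      (P j * B j * y ^ (-α) < P i * B i * x ^ (-α) ↔ c j * x < y) := by
    intro j x y hx hy
    have hxα : 0 < x ^ α := Real.rpow_pos_of_pos hx α
    have hyα : 0 < y ^ α := Real.rpow_pos_of_pos hy α
    rw [Real.rpow_neg hx.le, Real.rpow_neg hy.le, ← div_eq_mul_inv, ← div_eq_mul_inv,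
      div_lt_div_iff₀ hyα hxα,
      ← Real.rpow_lt_rpow_iff (mul_pos (hcpos j) hx).le hy.le hαpos,
      Real.mul_rpow (hcpos j).le hx.le, hc,
      Real.rpow_inv_rpow (div_pos (hQpos j) (hQpos i)).le hαpos.ne',
      div_mul_eq_mul_div, div_lt_iff₀ (hQpos i)]
    constructor <;> intro h <;> nlinarith
  -- the positivity set
  have hGj : ∀ j, μ {ω | 0 < R j ω}ᶜ = 0 := by
    intro j
    have h1 : μ {ω | 0 < R j ω} = 1 := by
      have := hccdf j 0 le_rfl
      norm_num at this
      simpa using this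
    rw [measure_compl (measurableSet_lt measurable_const (hmeas j)) (measure_ne_top μ _), h1,
      measure_univ, tsub_self]
  have hG : μ (⋂ j, {ω | 0 < R j ω})ᶜ = 0 := by
    rw [compl_iInter]
    exact measure_iUnion_null fun j => hGj j
  -- replace event
  have hEE' : μ {ω | ∀ j, j ≠ i → P j * B j * (R j ω) ^ (-α) < P i * B i * (R i ω) ^ (-α)}
      = μ {ω | ∀ j, j ≠ i → c j * R i ω < R j ω} := by
    have hsets : {ω | ∀ j, j ≠ i → P j * B j * (R j ω) ^ (-α) < P i * B i * (R i ω) ^ (-α)}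
        ∩ (⋂ j, {ω | 0 < R j ω})
        = {ω | ∀ j, j ≠ i → c j * R i ω < R j ω} ∩ (⋂ j, {ω | 0 < R j ω}) := by
      ext ω
      simp only [mem_inter_iff, mem_setOf_eq, mem_iInter]
      constructor
      · rintro ⟨h1, h2⟩
        exact ⟨fun j hj => (key j _ _ (h2 i) (h2 j)).mp (h1 j hj), h2⟩
      · rintro ⟨h1, h2⟩
        exact ⟨fun j hj => (key j _ _ (h2 i) (h2 j)).mpr (h1 j hj), h2⟩
    calc μ {ω | ∀ j, j ≠ i → P j * B j * (R j ω) ^ (-α) < P i * B i * (R i ω) ^ (-α)}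
        = μ ({ω | ∀ j, j ≠ i → P j * B j * (R j ω) ^ (-α) < P i * B i * (R i ω) ^ (-α)}
            ∩ (⋂ j, {ω | 0 < R j ω})) := (measure_inter_conull hG).symm
      _ = μ ({ω | ∀ j, j ≠ i → c j * R i ω < R j ω} ∩ (⋂ j, {ω | 0 < R j ω})) := by rw [hsets]
      _ = μ {ω | ∀ j, j ≠ i → c j * R i ω < R j ω} := measure_inter_conull hG
  rw [hEE']
  -- independence setup
  set T : Finset (Fin K) := {i}ᶜ with hT
  have hmemT : ∀ j, j ∈ T ↔ j ≠ i := by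
    intro j; simp [hT]
  set g : Ω → (↥T → ℝ) := fun ω j => R j ω with hg
  have hgmeas : Measurable g := measurable_pi_lambda _ fun j => hmeas j
  have hpair : ProbabilityTheory.IndepFun (R i) g μ := by
    have h1 := hindep.indepFun_finset {i} T (by simp [hT]) hmeas
    have h2 := h1.comp
      (measurable_pi_apply (⟨i, Finset.mem_singleton_self i⟩ : ↥({i} : Finset (Fin K))))
      (measurable_id (α := ↥T → ℝ))
    exact h2
  set A : Set (ℝ × (↥T → ℝ)) := {p | ∀ j : ↥T, c j * p.1 < p.2 j} with hA
  have hAmeas : MeasurableSet A := by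
    have hrw : A = ⋂ j : ↥T, {p : ℝ × (↥T → ℝ) | c j * p.1 < p.2 j} := by
      ext p; simp [hA]
    rw [hrw]
    exact MeasurableSet.iInter fun j =>
      measurableSet_lt (measurable_fst.const_mul _) ((measurable_pi_apply j).comp measurable_snd)
  have hEA : μ {ω | ∀ j, j ≠ i → c j * R i ω < R j ω}
      = (μ.map (fun ω => (R i ω, g ω))) A := by
    rw [Measure.map_apply ((hmeas i).prodMk hgmeas) hAmeas]
    congr 1
    ext ω
    simp only [mem_preimage, hA, mem_setOf_eq, hg]
    constructor
    · intro h j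
      exact h j ((hmemT j).mp j.2)
    · intro h j hj
      exact h ⟨j, (hmemT j).mpr hj⟩
  rw [hEA,
    (ProbabilityTheory.indepFun_iff_map_prod_eq_prod_map_map (hmeas i).aemeasurable
      hgmeas.aemeasurable).mp hpair]
  have : IsProbabilityMeasure (μ.map g) := Measure.isProbabilityMeasure_map hgmeas.aemeasurable
  rw [Measure.prod_apply hAmeas]
  -- inner integrand
  set s0 : ℝ := ∑ j ∈ T, lam j * (c j)^2 with hs0def
  have hs0 : 0 < s0 := by
    refine Finset.sum_pos (fun j _ => mul_pos (hlam j) (pow_pos (hcpos j) 2)) ?_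
    exact ⟨j₀, (hmemT j₀).mpr hj₀⟩
  have hinner : ∀ x : ℝ, 0 ≤ x → (μ.map g) (Prod.mk x ⁻¹' A)
      = ENNReal.ofReal (Real.exp (-s0 * Real.pi * x^2)) := by
    intro x hx
    rw [Measure.map_apply hgmeas (measurable_prodMk_left hAmeas)]
    have hset : g ⁻¹' (Prod.mk x ⁻¹' A) = ⋂ j ∈ T, R j ⁻¹' Ioi (c j * x) := by
      ext ω
      simp only [mem_preimage, hA, mem_setOf_eq, hg, mem_iInter, mem_Ioi]
      exact ⟨fun h j hj => h ⟨j, hj⟩, fun h j => h j j.2⟩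
    rw [hset, hindep.meas_biInter (fun j _ => ⟨Ioi (c j * x), measurableSet_Ioi, rfl⟩)]
    have hterm : ∀ j ∈ T, μ (R j ⁻¹' Ioi (c j * x))
        = ENNReal.ofReal (Real.exp (-(lam j * (c j)^2) * Real.pi * x^2)) := by
      intro j _
      have h0 : 0 ≤ c j * x := mul_nonneg (hcpos j).le hx
      have h1 := hccdf j (c j * x) h0
      have h2 : R j ⁻¹' Ioi (c j * x) = {ω | c j * x < R j ω} := rfl
      rw [h2, h1]
      congr 1
      rw [mul_pow]
      ring
    rw [Finset.prod_congr rfl hterm,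
      ← ENNReal.ofReal_prod_of_nonneg (fun j _ => (Real.exp_pos _).le), ← Real.exp_sum]
    have hsum0 : ∑ j ∈ T, (-(lam j * (c j)^2) * Real.pi * x^2) = -s0 * Real.pi * x^2 := by
      rw [hs0def, ← Finset.sum_neg_distrib, Finset.sum_mul, Finset.sum_mul]
    rw [hsum0]
  -- restrict to nonnegative x
  have hae : ∀ᵐ x ∂(μ.map (R i)), 0 ≤ x := by
    rw [ae_iff]
    have h1 : {x : ℝ | ¬ 0 ≤ x} = Iio 0 := by ext x; simp [not_le]
    rw [h1, Measure.map_apply (hmeas i) measurableSet_Iio]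
    have h2 : R i ⁻¹' Iio 0 = ∅ := by
      ext ω; simp [not_lt.mpr (hnn i ω)]
    rw [h2, measure_empty]
  have hcongr : ∫⁻ x, (μ.map g) (Prod.mk x ⁻¹' A) ∂(μ.map (R i))
      = ∫⁻ x, ENNReal.ofReal (Real.exp (-s0 * Real.pi * x^2)) ∂(μ.map (R i)) := by
    refine lintegral_congr_ae ?_
    filter_upwards [hae] with x hx
    exact hinner x hx
  rw [hcongr]
  -- layer cake
  have hfmeas : Measurable fun x : ℝ => Real.exp (-s0 * Real.pi * x^2) := by
    fun_prop
  rw [lintegral_eq_lintegral_meas_le (μ.map (R i))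
    (Filter.Eventually.of_forall fun x => (Real.exp_pos _).le) hfmeas.aemeasurable]
  set cst : ℝ := lam i / s0 with hcst
  have hcstpos : 0 < cst := div_pos (hlam i) hs0
  -- survival function identity
  have hsurv : ∀ t ∈ Ioi (0:ℝ), (μ.map (R i)) {x | t ≤ Real.exp (-s0 * Real.pi * x^2)}
      = 1 - ENNReal.ofReal (t ^ cst) := by
    intro t ht
    rw [mem_Ioi] at ht
    have hπ : (0:ℝ) < Real.pi := Real.pi_pos
    have hs0π : 0 < s0 * Real.pi := mul_pos hs0 hπ
    set b : ℝ := -Real.log t / (s0 * Real.pi) with hb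
    have hsetb : {x : ℝ | t ≤ Real.exp (-s0 * Real.pi * x^2)} = {x : ℝ | x^2 ≤ b} := by
      ext x
      simp only [mem_setOf_eq]
      rw [← Real.log_le_iff_le_exp ht, hb, le_div_iff₀ hs0π]
      constructor <;> intro h <;> nlinarith
    rw [hsetb]
    have hexp : Real.exp (-(lam i) * Real.pi * b) = t ^ cst := by
      rw [Real.rpow_def_of_pos ht, hb, hcst]
      congr 1
      field_simp
    by_cases hbpos : 0 ≤ b
    · have hmb : MeasurableSet {x : ℝ | x^2 ≤ b} :=
        measurableSet_le (by fun_prop) measurable_const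
      rw [Measure.map_apply (hmeas i) hmb]
      have hpre : R i ⁻¹' {x : ℝ | x^2 ≤ b} = {ω | Real.sqrt b < R i ω}ᶜ := by
        ext ω
        simp only [mem_preimage, mem_setOf_eq, mem_compl_iff, not_lt]
        rw [← Real.le_sqrt (hnn i ω) hbpos]
      rw [hpre, measure_compl (measurableSet_lt measurable_const (hmeas i)) (measure_ne_top μ _),
        measure_univ, hccdf i (Real.sqrt b) (Real.sqrt_nonneg b), Real.sq_sqrt hbpos, hexp]
    · push_neg at hbpos
      have hempty : {x : ℝ | x^2 ≤ b} = (∅ : Set ℝ) := by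
        ext x; simp only [mem_setOf_eq, mem_empty_iff_false, iff_false, not_le]
        exact lt_of_lt_of_le hbpos (sq_nonneg x)
      rw [hempty, measure_empty]
      have ht1 : 1 ≤ t ^ cst := by
        apply Real.one_le_rpow _ hcstpos.le
        by_contra hcon
        push_neg at hcon
        have hlogneg : 0 < -Real.log t := by
          have := Real.log_neg ht hcon
          linarith
        apply absurd hbpos.not_ge
        push_neg
        rw [hb]
        exact (div_pos hlogneg hs0π).le
      symm
      rw [tsub_eq_zero_of_le]
      exact ENNReal.one_le_ofReal.mpr ht1
  rw [setLIntegral_congr_fun measurableSet_Ioi hsurv]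
  -- split the integral
  rw [← Ioc_union_Ioi_eq_Ioi (zero_le_one : (0:ℝ) ≤ 1),
    lintegral_union measurableSet_Ioi (Ioc_disjoint_Ioi le_rfl)]
  have hzero : ∀ t ∈ Ioi (1:ℝ), (1 - ENNReal.ofReal (t ^ cst)) = (0 : ENNReal) := by
    intro t ht
    rw [mem_Ioi] at ht
    exact tsub_eq_zero_of_le (ENNReal.one_le_ofReal.mpr (Real.one_le_rpow ht.le hcstpos.le))
  rw [setLIntegral_congr_fun measurableSet_Ioi hzero,
    lintegral_zero, add_zero]
  have hIoc : ∀ t ∈ Ioc (0:ℝ) 1, (1 - ENNReal.ofReal (t ^ cst)) = ENNReal.ofReal (1 - t ^ cst) := by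
    intro t ht
    rw [ENNReal.ofReal_sub _ (Real.rpow_nonneg ht.1.le _), ENNReal.ofReal_one]
  rw [setLIntegral_congr_fun measurableSet_Ioc hIoc]
  have hint : IntegrableOn (fun t : ℝ => 1 - t ^ cst) (Ioc 0 1) := by
    have h1 : IntervalIntegrable (fun t : ℝ => 1 - t ^ cst) volume 0 1 :=
      intervalIntegrable_const.sub (intervalIntegral.intervalIntegrable_rpow' (by linarith))
    rwa [intervalIntegrable_iff_integrableOn_Ioc_of_le zero_le_one] at h1
  have hnonneg : 0 ≤ᵐ[volume.restrict (Ioc (0:ℝ) 1)] fun t => 1 - t ^ cst := by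
    filter_upwards [ae_restrict_mem measurableSet_Ioc] with t ht
    have := Real.rpow_le_one ht.1.le ht.2 hcstpos.le
    simp only [Pi.zero_apply]
    linarith
  rw [← ofReal_integral_eq_lintegral_ofReal hint hnonneg]
  have hval : ∫ t in Ioc (0:ℝ) 1, (1 - t ^ cst) = 1 - 1/(cst+1) := by
    rw [← intervalIntegral.integral_of_le zero_le_one,
      intervalIntegral.integral_sub intervalIntegrable_const
        (intervalIntegral.intervalIntegrable_rpow' (by linarith)),
      intervalIntegral.integral_const, integral_rpow (Or.inl (by linarith : (-1:ℝ) < cst)),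
      Real.one_rpow, Real.zero_rpow (by positivity : cst + 1 ≠ 0)]
    norm_num
  rw [hval]
  congr 1
  have hsum : ∑ j, (lam j / lam i) * ((P j * B j) / (P i * B i)) ^ (2/α)
      = (lam i + s0) / lam i := by
    have hterm : ∀ j, (lam j / lam i) * ((P j * B j) / (P i * B i)) ^ (2/α)
        = (lam j * (c j)^2) / lam i := by
      intro j; rw [← hc2 j]; ring
    rw [Finset.sum_congr rfl fun j _ => hterm j, ← Finset.sum_div]
    congr 1
    rw [← Finset.sum_add_sum_compl {i} (fun j => lam j * (c j)^2), Finset.sum_singleton, hci,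
      one_pow, mul_one, ← hT, ← hs0def]
  rw [hsum, hcst]
  have h1 : lam i + s0 ≠ 0 := (add_pos (hlam i) hs0).ne'
  have h2 : lam i / s0 + 1 ≠ 0 := ne_of_gt (by linarith [div_pos (hlam i) hs0])
  field_simp
  ring
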